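/- (Explicit optimal purifying Hamiltonian; computation in the first proof of Theorem 3.) Let ρ be a full-rank d×d density matrix with spectral decomposition ρ = Σ_j p_j |φ_j⟩⟨φ_j|, where p_j > 0 and {φ_j} is an orthonormal basis of ℂ^d, and let H_S be an Hermitian d×d matrix. Define the Hermitian matrix H_A by its matrix elements ⟨φ_a|H_A|φ_b⟩ = −2·(√(p_a p_b)/(p_a + p_b))·⟨φ_b|H_S|φ_a⟩, the unit vector Φ = Σ_j √p_j φ_j ⊗ φ_j ∈ ℂ^d ⊗ ℂ^d, and H_tot = H_S ⊗ I + I ⊗ H_A. Then: (i) Tr(ρ H_A) = −Tr(ρ H_S), and consequently ⟨Φ|H_tot|Φ⟩ = 0; (ii) ⟨Φ|H_tot²|Φ⟩ − ⟨Φ|H_tot|Φ⟩² = F_{H_S}(ρ)/4; (iii) F_{H_S}(ρ)/4 = V_{H_S}(ρ) − V_{H_A}(ρ), where V_X(ρ) = Tr(ρ X²) − (Tr(ρ X))². -/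

import Mathlib

open Matrix Complex Filter Kronecker
open scoped ComplexOrder

noncomputable section

/-- n-fold Kronecker power of a matrix, indexed by functions `Fin n → Fin d`. -/
def kronPow {d : ℕ} (X : Matrix (Fin d) (Fin d) ℂ) (n : ℕ) :
    Matrix (Fin n → Fin d) (Fin n → Fin d) ℂ :=
  Matrix.of fun i j => ∏ k, X (i k) (j k)

/-- The `n`-copy (non-interacting) Hamiltonian `Σᵢ I^{⊗(i-1)} ⊗ H ⊗ I^{⊗(n-i)}`. -/
def nCopyHam {d : ℕ} (H : Matrix (Fin d) (Fin d) ℂ) (n : ℕ) :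
    Matrix (Fin n → Fin d) (Fin n → Fin d) ℂ :=
  ∑ k : Fin n, Matrix.of fun i j =>
    H (i k) (j k) * ∏ l ∈ Finset.univ.erase k, (if i l = j l then (1 : ℂ) else 0)

/-- Time evolution unitary `e^{-iHt}`. -/
def timeEvol {m : Type*} [Fintype m] [DecidableEq m] (H : Matrix m m ℂ) (t : ℝ) :
    Matrix m m ℂ :=
  NormedSpace.exp ((-(Complex.I * (t : ℂ))) • H)

/-- The positive-semidefinite square root `U √D Uᴴ` (the older Mathlib's `PosSemidef.sqrt`). -/
def posSemidefSqrt {m : Type*} [Fintype m] [DecidableEq m] {A : Matrix m m ℂ}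
    (hA : A.PosSemidef) : Matrix m m ℂ :=
  hA.1.eigenvectorUnitary.1 * diagonal ((↑) ∘ (hA.1.eigenvalues · |>.sqrt)) *
  (star hA.1.eigenvectorUnitary : Matrix m m ℂ)

/-- Trace norm `‖A‖₁ = Tr √(AᴴA)`. -/
def traceNorm {m : Type*} [Fintype m] [DecidableEq m] (A : Matrix m m ℂ) : ℝ :=
  ((posSemidefSqrt (Matrix.posSemidef_conjTranspose_mul_self A)).trace).re

/-- A quantum channel: a map admitting a Kraus representation. -/
def IsQuantumChannel {m n : Type*} [Fintype m] [DecidableEq m] [Fintype n] [DecidableEq n]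
    (E : Matrix m m ℂ → Matrix n n ℂ) : Prop :=
  ∃ (K : ℕ) (A : Fin K → Matrix n m ℂ),
    (∀ X, E X = ∑ k, A k * X * (A k)ᴴ) ∧ (∑ k, (A k)ᴴ * A k = 1)

/-- Time-translation invariance of a map w.r.t. input/output Hamiltonians. -/
def IsTI {m n : Type*} [Fintype m] [DecidableEq m] [Fintype n] [DecidableEq n]
    (Hin : Matrix m m ℂ) (Hout : Matrix n n ℂ)
    (E : Matrix m m ℂ → Matrix n n ℂ) : Prop :=
  ∀ (t : ℝ) (X : Matrix m m ℂ),
    timeEvol Hout t * E X * timeEvol Hout (-t) =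
      E (timeEvol Hin t * X * timeEvol Hin (-t))

/-- Energy variance of a (unit) vector. -/
def varVec {m : Type*} [Fintype m] (H : Matrix m m ℂ) (ψ : m → ℂ) : ℝ :=
  (star ψ ⬝ᵥ ((H * H) *ᵥ ψ)).re - ((star ψ ⬝ᵥ (H *ᵥ ψ)).re) ^ 2

/-- The quantum Fisher information formula for a given spectral decomposition data. -/
def qfiOf {m : Type*} [Fintype m] (H : Matrix m m ℂ) (p : m → ℝ) (φ : m → m → ℂ) : ℝ :=
  2 * ∑ j, ∑ k,
    if 0 < p j + p k then
      (p j - p k) ^ 2 / (p j + p k) * Complex.normSq (star (φ j) ⬝ᵥ (H *ᵥ φ k))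
    else 0

/-- Quantum Fisher information of a Hermitian (e.g. density) matrix `ρ` w.r.t. `H`. -/
def QFI {m : Type*} [Fintype m] [DecidableEq m] {ρ : Matrix m m ℂ}
    (hρ : ρ.IsHermitian) (H : Matrix m m ℂ) : ℝ :=
  qfiOf H hρ.eigenvalues (fun j i => hρ.eigenvectorBasis j i)

open scoped Classical in
/-- Total positive-semidefinite square root (zero on non-PSD inputs). -/
def msqrt {m : Type*} [Fintype m] [DecidableEq m] (A : Matrix m m ℂ) : Matrix m m ℂ :=
  if h : A.PosSemidef then posSemidefSqrt h else 0

/-- Fidelity `Fid(ρ,σ) = (Tr √(√ρ σ √ρ))² = ‖√σ √ρ‖₁²`. -/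
def fid {m : Type*} [Fintype m] [DecidableEq m] (ρ σ : Matrix m m ℂ) : ℝ :=
  (traceNorm (msqrt σ * msqrt ρ)) ^ 2

/-- Density matrix. -/
def IsDensityMatrix {m : Type*} [Fintype m] (ρ : Matrix m m ℂ) : Prop :=
  ρ.PosSemidef ∧ ρ.trace = 1


/-- Variance of an observable `X` in the state `ρ`: `Tr(ρX²) − (Tr(ρX))²`. -/
def varMat {m : Type*} [Fintype m] (X ρ : Matrix m m ℂ) : ℝ :=
  ((ρ * (X * X)).trace).re - (((ρ * X).trace).re) ^ 2

section AuxOPH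
variable {d : ℕ}


lemma opt_completeness (φ : Fin d → Fin d → ℂ)
    (horth : ∀ a b, star (φ a) ⬝ᵥ φ b = if a = b then (1:ℂ) else 0) :
    ∀ a b, ∑ j, φ j a * (starRingEnd ℂ) (φ j b) = if a = b then (1:ℂ) else 0 := by
  have h1 : (Matrix.of fun i j => φ j i)ᴴ * (Matrix.of fun i j => φ j i) = 1 := by
    ext a b
    simpa [Matrix.mul_apply, Matrix.conjTranspose_apply, Matrix.one_apply, dotProduct,
      mul_comm] using horth a b
  have h2 := mul_eq_one_comm.mp h1
  intro a b
  have := Matrix.ext_iff.mpr h2 a b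
  simpa [Matrix.mul_apply, Matrix.conjTranspose_apply, Matrix.one_apply] using this

lemma opt_expandDot (φ : Fin d → Fin d → ℂ)
    (hc : ∀ a b, ∑ j, φ j a * (starRingEnd ℂ) (φ j b) = if a = b then (1:ℂ) else 0)
    (M : Matrix (Fin d) (Fin d) ℂ) (w : Fin d → ℂ) (a : Fin d) :
    star (φ a) ⬝ᵥ (M *ᵥ w) = ∑ j, (star (φ a) ⬝ᵥ (M *ᵥ φ j)) * (star (φ j) ⬝ᵥ w) := by
  simp only [dotProduct, mulVec, Pi.star_apply, RCLike.star_def, Finset.mul_sum, Finset.sum_mul]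
  symm
  rw [Finset.sum_comm]
  conv_lhs => enter [2, x1]; rw [Finset.sum_comm]
  conv_lhs => enter [2, x1, 2, x2]; rw [Finset.sum_comm]
  have key : ∀ x1 x2 i : Fin d,
      (∑ x, (starRingEnd ℂ) (φ a x2) * (M x2 i * φ x i) * ((starRingEnd ℂ) (φ x x1) * w x1))
      = (if i = x1 then (1:ℂ) else 0) * ((starRingEnd ℂ) (φ a x2) * M x2 i * w x1) := by
    intro x1 x2 i
    rw [← hc i x1, Finset.sum_mul]
    exact Finset.sum_congr rfl fun x _ => by ring
  simp only [key, ite_mul, one_mul, zero_mul, Finset.sum_ite_eq', Finset.sum_ite_eq,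
    Finset.mem_univ, if_true]
  rw [Finset.sum_comm]
  exact Finset.sum_congr rfl fun x _ => Finset.sum_congr rfl fun i _ => by ring

lemma opt_traceForm (p : Fin d → ℝ) (φ : Fin d → Fin d → ℂ) (M : Matrix (Fin d) (Fin d) ℂ) :
    ((∑ j, ((p j : ℝ) : ℂ) • Matrix.vecMulVec (φ j) (star (φ j))) * M).trace
      = ∑ j, ((p j : ℝ) : ℂ) * (star (φ j) ⬝ᵥ (M *ᵥ φ j)) := by
  rw [Finset.sum_mul, Matrix.trace_sum]
  refine Finset.sum_congr rfl fun j _ => ?_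
  rw [Matrix.smul_mul, Matrix.trace_smul, smul_eq_mul]
  congr 1
  simp only [Matrix.trace, Matrix.diag_apply, Matrix.mul_apply, Matrix.vecMulVec_apply,
    dotProduct, mulVec, Pi.star_apply, RCLike.star_def, Finset.mul_sum]
  rw [Finset.sum_comm]
  exact Finset.sum_congr rfl fun x _ => Finset.sum_congr rfl fun i _ => by ring

lemma opt_sumDot {m ι : Type*} [Fintype m] (s : Finset ι) (f : ι → m → ℂ) (w : m → ℂ) :
    (∑ i ∈ s, f i) ⬝ᵥ w = ∑ i ∈ s, f i ⬝ᵥ w := by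
  simp only [dotProduct, Finset.sum_apply, Finset.sum_mul]
  exact Finset.sum_comm

lemma opt_dotSum {m ι : Type*} [Fintype m] (s : Finset ι) (v : m → ℂ) (f : ι → m → ℂ) :
    v ⬝ᵥ (∑ i ∈ s, f i) = ∑ i ∈ s, v ⬝ᵥ f i := by
  simp only [dotProduct, Finset.sum_apply, Finset.mul_sum]
  exact Finset.sum_comm

lemma opt_tensorDot (u1 v1 u2 v2 : Fin d → ℂ) (X Y : Matrix (Fin d) (Fin d) ℂ) :
    star (fun q : Fin d × Fin d => u1 q.1 * v1 q.2) ⬝ᵥ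
      ((X ⊗ₖ Y) *ᵥ fun q : Fin d × Fin d => u2 q.1 * v2 q.2)
    = (star u1 ⬝ᵥ (X *ᵥ u2)) * (star v1 ⬝ᵥ (Y *ᵥ v2)) := by
  simp only [dotProduct, mulVec, Pi.star_apply, RCLike.star_def, Matrix.kroneckerMap_apply,
    Fintype.sum_prod_type, _root_.map_mul, Finset.mul_sum, Finset.sum_mul]
  conv_lhs => enter [2, a]; rw [Finset.sum_comm]
  conv_lhs => rw [Finset.sum_comm]
  conv_lhs => enter [2, a, 2, b]; rw [Finset.sum_comm]
  conv_lhs => enter [2, a]; rw [Finset.sum_comm]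
  conv_lhs => rw [Finset.sum_comm]
  conv_lhs => enter [2, a]; rw [Finset.sum_comm]
  conv_lhs => enter [2, a, 2, b]; rw [Finset.sum_comm]
  conv_lhs => enter [2, a]; rw [Finset.sum_comm]
  conv_lhs => rw [Finset.sum_comm]
  refine Finset.sum_congr rfl fun a _ => Finset.sum_congr rfl fun b _ =>
    Finset.sum_congr rfl fun c _ => Finset.sum_congr rfl fun e _ => by ring

lemma opt_kronForm (p : Fin d → ℝ) (φ : Fin d → Fin d → ℂ) (X Y : Matrix (Fin d) (Fin d) ℂ) :
    star (fun q : Fin d × Fin d => ∑ j, ((Real.sqrt (p j) : ℝ) : ℂ) * φ j q.1 * φ j q.2) ⬝ᵥ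
      ((X ⊗ₖ Y) *ᵥ fun q : Fin d × Fin d => ∑ j, ((Real.sqrt (p j) : ℝ) : ℂ) * φ j q.1 * φ j q.2)
    = ∑ j, ∑ k, ((Real.sqrt (p j) : ℝ) : ℂ) * ((Real.sqrt (p k) : ℝ) : ℂ) *
        ((star (φ j) ⬝ᵥ (X *ᵥ φ k)) * (star (φ j) ⬝ᵥ (Y *ᵥ φ k))) := by
  have hPhi : (fun q : Fin d × Fin d => ∑ j, ((Real.sqrt (p j) : ℝ) : ℂ) * φ j q.1 * φ j q.2)
      = ∑ j, ((Real.sqrt (p j) : ℝ) : ℂ) •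
          (fun q : Fin d × Fin d => φ j q.1 * φ j q.2) := by
    ext q
    simp only [Finset.sum_apply, Pi.smul_apply, smul_eq_mul]
    exact Finset.sum_congr rfl fun j _ => by ring
  rw [hPhi, ← Matrix.mulVecLin_apply, map_sum]
  simp only [_root_.map_smul, Matrix.mulVecLin_apply, star_sum, star_smul, opt_sumDot,
    opt_dotSum, smul_dotProduct, dotProduct_smul, Finset.smul_sum]
  rw [Finset.sum_comm]
  refine Finset.sum_congr rfl fun j _ => Finset.sum_congr rfl fun k _ => ?_
  rw [opt_tensorDot]
  simp only [smul_eq_mul, RCLike.star_def, Complex.conj_ofReal]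
  ring

lemma opt_symmSum (N f g : Fin d → Fin d → ℝ) (hN : ∀ j k, N j k = N k j)
    (h : ∀ j k, f j k + f k j = g j k + g k j) :
    ∑ j, ∑ k, f j k * N j k = ∑ j, ∑ k, g j k * N j k := by
  have key : ∀ F : Fin d → Fin d → ℝ,
      2 * (∑ j, ∑ k, F j k * N j k) = ∑ j, ∑ k, (F j k + F k j) * N j k := by
    intro F
    rw [two_mul]
    conv_lhs => enter [2]; rw [Finset.sum_comm]
    rw [← Finset.sum_add_distrib]
    refine Finset.sum_congr rfl fun j _ => ?_
    rw [← Finset.sum_add_distrib]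
    refine Finset.sum_congr rfl fun k _ => ?_
    rw [hN k j]
    ring
  have h2 : 2 * (∑ j, ∑ k, f j k * N j k) = 2 * (∑ j, ∑ k, g j k * N j k) := by
    rw [key f, key g]
    exact Finset.sum_congr rfl fun j _ => Finset.sum_congr rfl fun k _ => by rw [h j k]
  linarith

lemma opt_pointwise1 (a b : ℝ) (ha : 0 < a) (hb : 0 < b) :
    (a + 2 * (Real.sqrt a * Real.sqrt b * (-2 * (Real.sqrt (a*b) / (a+b))))
       + a * ((-2 * (Real.sqrt (a*b) / (a+b))) * (-2 * (Real.sqrt (b*a) / (b+a)))))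
    + (b + 2 * (Real.sqrt b * Real.sqrt a * (-2 * (Real.sqrt (b*a) / (b+a))))
       + b * ((-2 * (Real.sqrt (b*a) / (b+a))) * (-2 * (Real.sqrt (a*b) / (a+b)))))
    = (1/2) * ((a-b)^2/(a+b)) + (1/2) * ((b-a)^2/(b+a)) := by
  have hcomm : b * a = a * b := mul_comm b a
  rw [hcomm]
  have hsab : Real.sqrt a * Real.sqrt b = Real.sqrt (a*b) := (Real.sqrt_mul ha.le b).symm
  have hs : a + b ≠ 0 := by positivity
  rw [add_comm b a, hsab, mul_comm (Real.sqrt b) (Real.sqrt a), hsab]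
  field_simp
  ring_nf
  simp only [Real.sq_sqrt ha.le, Real.sq_sqrt hb.le, Real.sq_sqrt (mul_pos ha hb).le]
  ring

lemma opt_pointwise2 (a b : ℝ) (ha : 0 < a) (hb : 0 < b) :
    (a - a * ((-2 * (Real.sqrt (a*b) / (a+b))) * (-2 * (Real.sqrt (b*a) / (b+a)))))
    + (b - b * ((-2 * (Real.sqrt (b*a) / (b+a))) * (-2 * (Real.sqrt (a*b) / (a+b)))))
    = (1/2) * ((a-b)^2/(a+b)) + (1/2) * ((b-a)^2/(b+a)) := by
  have hcomm : b * a = a * b := mul_comm b a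
  rw [hcomm]
  have hs : a + b ≠ 0 := by positivity
  rw [add_comm b a]
  field_simp
  ring_nf
  simp only [Real.sq_sqrt ha.le, Real.sq_sqrt hb.le, Real.sq_sqrt (mul_pos ha hb).le]
  ring


end AuxOPH

theorem optimal_purifying_hamiltonian
    {d : ℕ} (ρ HS HA : Matrix (Fin d) (Fin d) ℂ)
    (p : Fin d → ℝ) (φ : Fin d → Fin d → ℂ)
    (hp : ∀ j, 0 < p j) (hsum : ∑ j, p j = 1)
    (horth : ∀ a b, star (φ a) ⬝ᵥ φ b = if a = b then (1 : ℂ) else 0)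
    (hρdef : ρ = ∑ j, ((p j : ℝ) : ℂ) • Matrix.vecMulVec (φ j) (star (φ j)))
    (hHS : HS.IsHermitian)
    (hHA : ∀ a b, star (φ a) ⬝ᵥ (HA *ᵥ φ b) =
      ((-2 * (Real.sqrt (p a * p b) / (p a + p b)) : ℝ) : ℂ) *
        (star (φ b) ⬝ᵥ (HS *ᵥ φ a))) :
    ((ρ * HA).trace = -((ρ * HS).trace) ∧
      star (fun q : Fin d × Fin d => ∑ j, ((Real.sqrt (p j) : ℝ) : ℂ) * φ j q.1 * φ j q.2) ⬝ᵥ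
        ((HS ⊗ₖ (1 : Matrix (Fin d) (Fin d) ℂ) + (1 : Matrix (Fin d) (Fin d) ℂ) ⊗ₖ HA) *ᵥ
          fun q : Fin d × Fin d => ∑ j, ((Real.sqrt (p j) : ℝ) : ℂ) * φ j q.1 * φ j q.2) = 0) ∧
    varVec (HS ⊗ₖ (1 : Matrix (Fin d) (Fin d) ℂ) + (1 : Matrix (Fin d) (Fin d) ℂ) ⊗ₖ HA)
        (fun q : Fin d × Fin d => ∑ j, ((Real.sqrt (p j) : ℝ) : ℂ) * φ j q.1 * φ j q.2) =
      qfiOf HS p φ / 4 ∧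
    qfiOf HS p φ / 4 = varMat HS ρ - varMat HA ρ := by
  have hc := opt_completeness φ horth
  -- Hermitian matrix element
  have hherm : ∀ i m, HS m i = (starRingEnd ℂ) (HS i m) := by
    intro i m
    conv_lhs => rw [← hHS]
    rfl
  have hconj : ∀ j k,
      star (φ k) ⬝ᵥ (HS *ᵥ φ j) = (starRingEnd ℂ) (star (φ j) ⬝ᵥ (HS *ᵥ φ k)) := by
    intro j k
    simp only [dotProduct, mulVec, Pi.star_apply, RCLike.star_def, map_sum, _root_.map_mul,
      Complex.conj_conj, Finset.mul_sum]
    rw [Finset.sum_comm]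
    refine Finset.sum_congr rfl fun i _ => Finset.sum_congr rfl fun m _ => ?_
    rw [hherm i m]
    ring
  -- N
  set N : Fin d → Fin d → ℝ := fun j k => Complex.normSq (star (φ j) ⬝ᵥ (HS *ᵥ φ k)) with hNdef
  set r : Fin d → Fin d → ℝ := fun j k => -2 * (Real.sqrt (p j * p k) / (p j + p k)) with hrdef
  have hNsymm : ∀ j k, N j k = N k j := by
    intro j k
    simp only [hNdef]
    rw [hconj j k, Complex.normSq_conj]
  have hmc : ∀ j k, (star (φ j) ⬝ᵥ (HS *ᵥ φ k)) * (star (φ k) ⬝ᵥ (HS *ᵥ φ j))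
      = ((N j k : ℝ) : ℂ) := by
    intro j k
    rw [hconj j k, Complex.mul_conj]
  have hA' : ∀ j k, star (φ j) ⬝ᵥ (HA *ᵥ φ k)
      = ((r j k : ℝ) : ℂ) * (star (φ k) ⬝ᵥ (HS *ᵥ φ j)) := fun j k => hHA j k
  have hAjj : ∀ j, star (φ j) ⬝ᵥ (HA *ᵥ φ j) = -(star (φ j) ⬝ᵥ (HS *ᵥ φ j)) := by
    intro j
    rw [hA' j j]
    have hr : r j j = -1 := by
      simp only [hrdef]
      rw [Real.sqrt_mul_self (hp j).le]
      have := (hp j).ne'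
      have h2 : p j + p j ≠ 0 := (add_pos (hp j) (hp j)).ne'
      field_simp
      ring
    rw [hr]
    push_cast
    ring
  have hone : ∀ j k, star (φ j) ⬝ᵥ ((1 : Matrix (Fin d) (Fin d) ℂ) *ᵥ φ k)
      = if j = k then (1:ℂ) else 0 := by
    intro j k
    rw [Matrix.one_mulVec]
    exact horth j k
  have hS2 : ∀ a b, star (φ a) ⬝ᵥ ((HS * HS) *ᵥ φ b)
      = ∑ m, (star (φ a) ⬝ᵥ (HS *ᵥ φ m)) * (star (φ m) ⬝ᵥ (HS *ᵥ φ b)) := by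
    intro a b
    rw [← Matrix.mulVec_mulVec]
    exact opt_expandDot φ hc HS (HS *ᵥ φ b) a
  have hA2 : ∀ a b, star (φ a) ⬝ᵥ ((HA * HA) *ᵥ φ b)
      = ∑ m, (star (φ a) ⬝ᵥ (HA *ᵥ φ m)) * (star (φ m) ⬝ᵥ (HA *ᵥ φ b)) := by
    intro a b
    rw [← Matrix.mulVec_mulVec]
    exact opt_expandDot φ hc HA (HA *ᵥ φ b) a
  -- traces
  have trS : (ρ * HS).trace = ∑ j, ((p j : ℝ) : ℂ) * (star (φ j) ⬝ᵥ (HS *ᵥ φ j)) := by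
    rw [hρdef]; exact opt_traceForm p φ HS
  have trA : (ρ * HA).trace = ∑ j, ((p j : ℝ) : ℂ) * (star (φ j) ⬝ᵥ (HA *ᵥ φ j)) := by
    rw [hρdef]; exact opt_traceForm p φ HA
  -- part (i) first
  have part1 : (ρ * HA).trace = -((ρ * HS).trace) := by
    rw [trA, trS, ← Finset.sum_neg_distrib]
    refine Finset.sum_congr rfl fun j _ => ?_
    rw [hAjj j]; ring
  -- part (i) second
  have part2 : star (fun q : Fin d × Fin d =>
        ∑ j, ((Real.sqrt (p j) : ℝ) : ℂ) * φ j q.1 * φ j q.2) ⬝ᵥ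
      ((HS ⊗ₖ (1 : Matrix (Fin d) (Fin d) ℂ) + (1 : Matrix (Fin d) (Fin d) ℂ) ⊗ₖ HA) *ᵥ
        fun q : Fin d × Fin d => ∑ j, ((Real.sqrt (p j) : ℝ) : ℂ) * φ j q.1 * φ j q.2) = 0 := by
    rw [Matrix.add_mulVec, dotProduct_add, opt_kronForm, opt_kronForm]
    simp only [hone, mul_ite, ite_mul, mul_one, one_mul, mul_zero, zero_mul,
      Finset.sum_ite_eq', Finset.sum_ite_eq, Finset.mem_univ, if_true]
    rw [← Finset.sum_add_distrib]
    refine Finset.sum_eq_zero fun j _ => ?_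
    rw [hAjj j]
    ring
  -- qfi in convenient form
  have hqfi : qfiOf HS p φ = 2 * ∑ j, ∑ k, ((p j - p k) ^ 2 / (p j + p k)) * N j k := by
    simp only [qfiOf]
    congr 1
    refine Finset.sum_congr rfl fun j _ => Finset.sum_congr rfl fun k _ => ?_
    rw [if_pos (add_pos (hp j) (hp k))]
  have hps : ∀ j : Fin d, ((Real.sqrt (p j) : ℝ) : ℂ) * ((Real.sqrt (p j) : ℝ) : ℂ)
      = ((p j : ℝ) : ℂ) := by
    intro j
    rw [← Complex.ofReal_mul, Real.mul_self_sqrt (hp j).le]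
  have e1 : (∑ j, ∑ k, ((Real.sqrt (p j) : ℝ) : ℂ) * ((Real.sqrt (p k) : ℝ) : ℂ) *
        ((star (φ j) ⬝ᵥ ((HS * HS) *ᵥ φ k)) *
          (star (φ j) ⬝ᵥ ((1 : Matrix (Fin d) (Fin d) ℂ) *ᵥ φ k))))
      = (((∑ j, ∑ m, p j * N j m : ℝ)) : ℂ) := by
    push_cast
    simp only [hone, hS2, mul_ite, mul_one, mul_zero, Finset.sum_ite_eq, Finset.mem_univ,
      if_true]
    refine Finset.sum_congr rfl fun j _ => ?_
    rw [Finset.mul_sum]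
    refine Finset.sum_congr rfl fun m _ => ?_
    linear_combination (((Real.sqrt (p j) : ℝ) : ℂ) * ((Real.sqrt (p j) : ℝ) : ℂ)) * hmc j m +
      ((N j m : ℝ) : ℂ) * hps j
  have e2 : (∑ j, ∑ k, ((Real.sqrt (p j) : ℝ) : ℂ) * ((Real.sqrt (p k) : ℝ) : ℂ) *
        ((star (φ j) ⬝ᵥ (HS *ᵥ φ k)) * (star (φ j) ⬝ᵥ (HA *ᵥ φ k))))
      = (((∑ j, ∑ k, (Real.sqrt (p j) * Real.sqrt (p k) * r j k) * N j k : ℝ)) : ℂ) := by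
    push_cast
    refine Finset.sum_congr rfl fun j _ => Finset.sum_congr rfl fun k _ => ?_
    rw [hA' j k]
    linear_combination (((r j k : ℝ) : ℂ) * ((Real.sqrt (p j) : ℝ) : ℂ) *
      ((Real.sqrt (p k) : ℝ) : ℂ)) * hmc j k
  have e4 : (∑ j, ∑ k, ((Real.sqrt (p j) : ℝ) : ℂ) * ((Real.sqrt (p k) : ℝ) : ℂ) *
        ((star (φ j) ⬝ᵥ ((1 : Matrix (Fin d) (Fin d) ℂ) *ᵥ φ k)) *
          (star (φ j) ⬝ᵥ ((HA * HA) *ᵥ φ k))))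
      = (((∑ j, ∑ m, (p j * (r j m * r m j)) * N j m : ℝ)) : ℂ) := by
    push_cast
    simp only [hone, hA2, ite_mul, one_mul, zero_mul, mul_ite, mul_one, mul_zero,
      Finset.sum_ite_eq, Finset.mem_univ, if_true]
    refine Finset.sum_congr rfl fun j _ => ?_
    rw [Finset.mul_sum]
    refine Finset.sum_congr rfl fun m _ => ?_
    rw [hA' j m, hA' m j]
    linear_combination (((r j m : ℝ) : ℂ) * ((r m j : ℝ) : ℂ) *
        (((Real.sqrt (p j) : ℝ) : ℂ) * ((Real.sqrt (p j) : ℝ) : ℂ))) * hmc j m +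
      (((r j m : ℝ) : ℂ) * ((r m j : ℝ) : ℂ) * ((N j m : ℝ) : ℂ)) * hps j
  have hsym1 : ∑ j, ∑ k, (p j + 2 * (Real.sqrt (p j) * Real.sqrt (p k) * r j k)
        + p j * (r j k * r k j)) * N j k
      = ∑ j, ∑ k, ((1/2) * ((p j - p k) ^ 2 / (p j + p k))) * N j k := by
    refine opt_symmSum N _ _ hNsymm fun j k => ?_
    exact opt_pointwise1 (p j) (p k) (hp j) (hp k)
  have hsym2 : ∑ j, ∑ k, (p j - p j * (r j k * r k j)) * N j k
      = ∑ j, ∑ k, ((1/2) * ((p j - p k) ^ 2 / (p j + p k))) * N j k := by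
    refine opt_symmSum N _ _ hNsymm fun j k => ?_
    exact opt_pointwise2 (p j) (p k) (hp j) (hp k)
  have hhalf : ∑ j, ∑ k, ((1/2) * ((p j - p k) ^ 2 / (p j + p k))) * N j k
      = (1/2) * ∑ j, ∑ k, ((p j - p k) ^ 2 / (p j + p k)) * N j k := by
    rw [Finset.mul_sum]
    refine Finset.sum_congr rfl fun j _ => ?_
    rw [Finset.mul_sum]
    exact Finset.sum_congr rfl fun k _ => by ring
  -- part (ii)
  have part3 : varVec (HS ⊗ₖ (1 : Matrix (Fin d) (Fin d) ℂ) +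
        (1 : Matrix (Fin d) (Fin d) ℂ) ⊗ₖ HA)
        (fun q : Fin d × Fin d => ∑ j, ((Real.sqrt (p j) : ℝ) : ℂ) * φ j q.1 * φ j q.2)
      = qfiOf HS p φ / 4 := by
    simp only [varVec]
    rw [part2]
    have hKK : (HS ⊗ₖ (1 : Matrix (Fin d) (Fin d) ℂ) + (1 : Matrix (Fin d) (Fin d) ℂ) ⊗ₖ HA) *
          (HS ⊗ₖ (1 : Matrix (Fin d) (Fin d) ℂ) + (1 : Matrix (Fin d) (Fin d) ℂ) ⊗ₖ HA)
        = ((HS * HS) ⊗ₖ (1 : Matrix (Fin d) (Fin d) ℂ) + HS ⊗ₖ HA) +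
          (HS ⊗ₖ HA + (1 : Matrix (Fin d) (Fin d) ℂ) ⊗ₖ (HA * HA)) := by
      rw [add_mul, mul_add, mul_add, ← Matrix.mul_kronecker_mul, ← Matrix.mul_kronecker_mul,
        ← Matrix.mul_kronecker_mul, ← Matrix.mul_kronecker_mul]
      simp only [Matrix.one_mul, Matrix.mul_one]
    rw [hKK, Matrix.add_mulVec, dotProduct_add, Matrix.add_mulVec, Matrix.add_mulVec,
      dotProduct_add, dotProduct_add, opt_kronForm, opt_kronForm, opt_kronForm,
      e1, e2, e4, hqfi]
    simp only [Complex.zero_re, ← Complex.ofReal_add, Complex.ofReal_re]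
    have hcomb : ((∑ j, ∑ m, p j * N j m)
          + (∑ j, ∑ k, (Real.sqrt (p j) * Real.sqrt (p k) * r j k) * N j k))
          + ((∑ j, ∑ k, (Real.sqrt (p j) * Real.sqrt (p k) * r j k) * N j k)
          + (∑ j, ∑ m, (p j * (r j m * r m j)) * N j m))
        = ∑ j, ∑ k, (p j + 2 * (Real.sqrt (p j) * Real.sqrt (p k) * r j k)
            + p j * (r j k * r k j)) * N j k := by
      rw [← Finset.sum_add_distrib, ← Finset.sum_add_distrib, ← Finset.sum_add_distrib]
      refine Finset.sum_congr rfl fun j _ => ?_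
      rw [← Finset.sum_add_distrib, ← Finset.sum_add_distrib, ← Finset.sum_add_distrib]
      exact Finset.sum_congr rfl fun k _ => by ring
    rw [hcomb, hsym1, hhalf]
    ring
  -- part (iii)
  have trS2 : (ρ * (HS * HS)).trace = (((∑ j, ∑ m, p j * N j m : ℝ)) : ℂ) := by
    rw [hρdef, opt_traceForm]
    push_cast
    refine Finset.sum_congr rfl fun j _ => ?_
    rw [hS2 j j, Finset.mul_sum]
    refine Finset.sum_congr rfl fun m _ => ?_
    linear_combination ((p j : ℝ) : ℂ) * hmc j m
  have trA2 : (ρ * (HA * HA)).trace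
      = (((∑ j, ∑ m, (p j * (r j m * r m j)) * N j m : ℝ)) : ℂ) := by
    rw [hρdef, opt_traceForm]
    push_cast
    refine Finset.sum_congr rfl fun j _ => ?_
    rw [hA2 j j, Finset.mul_sum]
    refine Finset.sum_congr rfl fun m _ => ?_
    rw [hA' j m, hA' m j]
    linear_combination (((p j : ℝ) : ℂ) * ((r j m : ℝ) : ℂ) * ((r m j : ℝ) : ℂ)) * hmc j m
  have part4 : qfiOf HS p φ / 4 = varMat HS ρ - varMat HA ρ := by
    simp only [varMat]
    rw [trS2, trA2, part1, hqfi]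
    simp only [Complex.neg_re, neg_sq, Complex.ofReal_re]
    have hcomb2 : ((∑ j, ∑ m, p j * N j m)
          - (∑ j, ∑ m, (p j * (r j m * r m j)) * N j m))
        = ∑ j, ∑ k, (p j - p j * (r j k * r k j)) * N j k := by
      rw [← Finset.sum_sub_distrib]
      refine Finset.sum_congr rfl fun j _ => ?_
      rw [← Finset.sum_sub_distrib]
      exact Finset.sum_congr rfl fun k _ => by ring
    have := hcomb2
    rw [hsym2, hhalf] at hcomb2
    linarith
  exact ⟨⟨part1, part2⟩, part3, part4⟩

end
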